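/- Let p, q ≥ 2 be integers. The real analytic map h : ℂ² → ℂ defined by h(x,y) = (conj(x) · conj(y)) · (x^p + y^q), viewed as a map ℝ⁴ → ℝ², has a non-origin critical point in every neighbourhood of 0 if and only if p = q = 2. Equivalently, h has an isolated critical point at the origin if and only if (p,q) ≠ (2,2). -/

import Mathlib

open Complex

/-- for `h(x,y) = conj(xy)(x^p + y^q)` with `p, q ≥ 2`, using the
characterization of critical points of `h` (as a real map `ℝ⁴ → ℝ²`) by the three
equations, `h` has non-origin critical points in every neighbourhood of the origin
iff `p = q = 2`; equivalently `h` has an isolated critical point at `0` iff `(p,q) ≠ (2,2)`. -/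
theorem stmt1 (p q : ℕ) (hp : 2 ≤ p) (hq : 2 ≤ q) :
    (∀ ε : ℝ, 0 < ε → ∃ x y : ℂ, (x, y) ≠ (0, 0) ∧ ‖(x, y)‖ < ε ∧
      ((p : ℝ)^2 * ‖x*y‖^2 * ‖x‖^(2*(p-1))
          = ‖y‖^2 * ‖x^p + y^q‖^2 ∧
       (q : ℝ)^2 * ‖x*y‖^2 * ‖y‖^(2*(q-1))
          = ‖x‖^2 * ‖x^p + y^q‖^2 ∧
       x * (starRingEnd ℂ) y * ((‖x^p + y^q‖^2 : ℝ) : ℂ)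
          = (p : ℂ) * q * ((‖x*y‖^2 : ℝ) : ℂ)
            * ((starRingEnd ℂ) x)^(p-1) * y^(q-1))) ↔ (p = 2 ∧ q = 2) := by
  constructor
  · intro H
    by_contra hne
    obtain ⟨x, y, hxy0, -, h1, h2, -⟩ := H 1 one_pos
    set a := ‖x‖ with ha
    set b := ‖y‖ with hb
    set s := ‖x^p + y^q‖ with hs
    rw [show ‖x*y‖ = a * b from norm_mul _ _] at h1 h2
    have hx0 : x ≠ 0 := by
      rintro rfl
      have hy0 : y ≠ 0 := by rintro rfl; exact hxy0 rfl
      have hbpos : 0 < b := by simpa [hb] using norm_pos_iff.mpr hy0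
      have hss : s = b ^ q := by
        simp [hs, zero_pow (by omega : p ≠ 0), map_pow, norm_pow, hb]
      have h1' : (0:ℝ) = b^2 * (b^q)^2 := by
        simpa [ha, hss] using h1
      nlinarith [mul_pos (pow_pos hbpos 2) (pow_pos (pow_pos hbpos q) 2)]
    have hy0 : y ≠ 0 := by
      rintro rfl
      have hapos : 0 < a := by simpa [ha] using norm_pos_iff.mpr hx0
      have hss : s = a ^ p := by
        simp [hs, zero_pow (by omega : q ≠ 0), map_pow, norm_pow, ha]
      have h2' : (0:ℝ) = a^2 * (a^p)^2 := by
        simpa [hb, hss] using h2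
      nlinarith [mul_pos (pow_pos hapos 2) (pow_pos (pow_pos hapos p) 2)]
    have hapos : 0 < a := by simpa [ha] using norm_pos_iff.mpr hx0
    have hbpos : 0 < b := by simpa [hb] using norm_pos_iff.mpr hy0
    have key1 : ((p:ℝ) * a^p)^2 = s^2 := by
      have e : (p:ℝ)^2 * (a*b)^2 * a^(2*(p-1)) = (((p:ℝ) * a^p)^2) * b^2 := by
        have hA2 : (a^p)^2 = a^2 * a^(2*(p-1)) := by
          rw [← pow_mul, ← pow_add]; congr 1; omega
        rw [mul_pow (p:ℝ), hA2]; ring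
      rw [e, show b^2 * s^2 = s^2 * b^2 from mul_comm _ _] at h1
      exact mul_right_cancel₀ (pow_ne_zero 2 hbpos.ne') h1
    have key2 : ((q:ℝ) * b^q)^2 = s^2 := by
      have e : (q:ℝ)^2 * (a*b)^2 * b^(2*(q-1)) = (((q:ℝ) * b^q)^2) * a^2 := by
        have hB2 : (b^q)^2 = b^2 * b^(2*(q-1)) := by
          rw [← pow_mul, ← pow_add]; congr 1; omega
        rw [mul_pow (q:ℝ), hB2]; ring
      rw [e, show a^2 * s^2 = s^2 * a^2 from mul_comm _ _] at h2
      exact mul_right_cancel₀ (pow_ne_zero 2 hapos.ne') h2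
    have hppos : (0:ℝ) < p := by positivity
    have hqpos : (0:ℝ) < q := by positivity
    have hApos : 0 < a^p := pow_pos hapos p
    have hBpos : 0 < b^q := pow_pos hbpos q
    have hPA : (p:ℝ) * a^p = s := by
      refine (sq_eq_sq₀ (by positivity) (norm_nonneg _)).mp key1
    have hQB : (q:ℝ) * b^q = s := by
      refine (sq_eq_sq₀ (by positivity) (norm_nonneg _)).mp key2
    have hspos : 0 < s := hPA ▸ by positivity
    have htri : s ≤ a^p + b^q := by
      calc s ≤ ‖x^p‖ + ‖y^q‖ := norm_add_le _ _
        _ = a^p + b^q := by rw [norm_pow, norm_pow]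
    have hpq : (p:ℝ) + (q:ℝ) + 1 ≤ (p:ℝ) * q := by
      have : p + q + 1 ≤ p * q := by
        rcases (by omega : 3 ≤ p ∨ 3 ≤ q ∨ (p = 2 ∧ q = 2)) with h | h | h
        · nlinarith
        · nlinarith
        · exact absurd h hne
      exact_mod_cast this
    nlinarith [mul_le_mul_of_nonneg_left htri (le_of_lt (mul_pos hppos hqpos))]
  · rintro ⟨rfl, rfl⟩ ε hε
    have hc : (0:ℝ) < ε/2 := by linarith
    have ha1 : |ε/2| = ε/2 := abs_of_pos hc
    have ha2 : |2*(ε/2)^2| = 2*(ε/2)^2 := abs_of_nonneg (by positivity)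
    refine ⟨(ε/2 : ℝ), (ε/2 : ℝ), ?_, ?_, ?_, ?_, ?_⟩
    · simp only [ne_eq, Prod.mk.injEq, not_and]
      intro h
      exact absurd (by exact_mod_cast h) hc.ne'
    · have : ‖(((ε/2:ℝ):ℂ), ((ε/2:ℝ):ℂ))‖ = ε/2 := by
        simp [Prod.norm_def, Complex.norm_real, abs_of_pos hε]
      rw [this]; linarith
    all_goals {
      have h2 : ((ε/2:ℝ):ℂ)^(2:ℕ) + ((ε/2:ℝ):ℂ)^(2:ℕ) = ((2*(ε/2)^2 : ℝ):ℂ) := by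
        push_cast; ring
      rw [h2]
      simp only [← Complex.ofReal_mul, map_mul, Complex.norm_real, Real.norm_eq_abs, Complex.conj_ofReal,
        ha1, ha2]
      rw [show |ε / 2 * (ε / 2)| = ε / 2 * (ε / 2) from abs_of_nonneg (by positivity)]
      try push_cast
      ring }
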